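/- For angles 0 = c_1 ≤ c_2 ≤ ... ≤ c_n < π, the minimum of |p_1 + ∑_{i=2}^n p_i e^{ic_i}|² over all p_i ≥ 0 with ∑_i p_i = 1 equals cos²(c_n/2). -/

import Mathlib

theorem stmt_8 {n : ℕ} (c : Fin (n + 1) → ℝ) (hmono : Monotone c) (h0 : c 0 = 0)
    (hπ : c (Fin.last n) < Real.pi) :
    IsLeast
      {v : ℝ | ∃ p : Fin (n + 1) → ℝ, (∀ i, 0 ≤ p i) ∧ ∑ i, p i = 1 ∧
        v = ‖∑ i, (p i : ℂ) * Complex.exp ((c i : ℂ) * Complex.I)‖ ^ 2}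
      (Real.cos (c (Fin.last n) / 2) ^ 2) := by
  set C := c (Fin.last n) with hCdef
  have hC0 : 0 ≤ C := h0 ▸ hmono (Fin.zero_le _)
  constructor
  · refine ⟨fun i => (if i = 0 then 1/2 else 0) + (if i = Fin.last n then 1/2 else 0),
      fun i => by positivity, ?_, ?_⟩
    · simp [Finset.sum_add_distrib]
      norm_num
    · have hsum : (∑ i, ((((if i = 0 then (1:ℝ)/2 else 0) + (if i = Fin.last n then 1/2 else 0)) : ℝ) : ℂ) * Complex.exp ((c i : ℂ) * Complex.I))
          = 1/2 + 1/2 * Complex.exp ((C : ℂ) * Complex.I) := by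
        simp only [add_mul, Finset.sum_add_distrib, apply_ite Complex.ofReal,
          Complex.ofReal_zero, Complex.ofReal_add, ite_mul, zero_mul]
        rw [Finset.sum_ite_eq' Finset.univ (0 : Fin (n+1)), Finset.sum_ite_eq' Finset.univ (Fin.last n)]
        simp [h0]
        rfl
      rw [hsum]
      have : (1/2 + 1/2 * Complex.exp ((C : ℂ) * Complex.I)) =
          Complex.ofReal (1/2 + Real.cos C / 2) + Complex.ofReal (Real.sin C / 2) * Complex.I := by
        rw [Complex.exp_mul_I]
        push_cast
        ring
      rw [this]
      rw [Complex.sq_norm, Complex.normSq_add_mul_I]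
      have hc := Real.cos_sq (C/2)
      have hs := Real.sin_sq_add_cos_sq C
      rw [show 2 * (C/2) = C by ring] at hc
      nlinarith [hs, hc]
  · rintro v ⟨p, hp0, hp1, rfl⟩
    set z := ∑ i, (p i : ℂ) * Complex.exp ((c i : ℂ) * Complex.I) with hz
    have hcos_nonneg : 0 ≤ Real.cos (C/2) :=
      Real.cos_nonneg_of_mem_Icc ⟨by linarith [Real.pi_pos], by linarith⟩
    have hre : (Complex.exp ((-(C/2) : ℝ) * Complex.I) * z).re
        = ∑ i, p i * Real.cos (c i - C/2) := by
      rw [hz, Finset.mul_sum, Complex.re_sum]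
      refine Finset.sum_congr rfl fun i _ => ?_
      have : Complex.exp ((-(C/2) : ℝ) * Complex.I) * ((p i : ℂ) * Complex.exp ((c i : ℂ) * Complex.I))
          = (p i : ℂ) * Complex.exp (((c i - C/2 : ℝ) : ℂ) * Complex.I) := by
        rw [mul_comm, mul_assoc, ← Complex.exp_add]
        push_cast
        ring_nf
      rw [this]
      simp only [Complex.mul_re, Complex.ofReal_re, Complex.ofReal_im, zero_mul, sub_zero,
        Complex.exp_ofReal_mul_I_re]
    have hkey : Real.cos (C/2) ≤ ∑ i, p i * Real.cos (c i - C/2) := by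
      calc Real.cos (C/2) = ∑ i, p i * Real.cos (C/2) := by
            rw [← Finset.sum_mul, hp1, one_mul]
        _ ≤ ∑ i, p i * Real.cos (c i - C/2) := by
            refine Finset.sum_le_sum fun i _ => ?_
            refine mul_le_mul_of_nonneg_left ?_ (hp0 i)
            have h1 : 0 ≤ c i := h0 ▸ hmono (Fin.zero_le i)
            have h2 : c i ≤ C := hmono (Fin.le_last i)
            rw [← Real.cos_abs (c i - C/2)]
            apply Real.cos_le_cos_of_nonneg_of_le_pi (abs_nonneg _)
            · linarith
            · rw [abs_le]; constructor <;> linarith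
    have hle : Real.cos (C/2) ≤ ‖z‖ := by
      calc Real.cos (C/2) ≤ (Complex.exp ((-(C/2) : ℝ) * Complex.I) * z).re := by
            rw [hre]; exact hkey
        _ ≤ ‖Complex.exp ((-(C/2) : ℝ) * Complex.I) * z‖ := Complex.re_le_norm _
        _ = ‖z‖ := by
            rw [norm_mul, Complex.norm_exp_ofReal_mul_I, one_mul]
    exact pow_le_pow_left₀ hcos_nonneg hle 2
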